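/- For every integer m ≥ 0 and complex x with all denominators nonzero: (x;q)_{m+1} · ∑_{k=0}^m [m+k choose k]_q q^k / (xq;q)_k + (1/x;q)_{m+1} · ∑_{k=0}^m [m+k choose k]_q q^k / (q/x;q)_k = (x;q)_{m+1} (1/x;q)_{m+1}. -/

import Mathlib

noncomputable def qPoch (a q : ℂ) (n : ℕ) : ℂ := ∏ i ∈ Finset.range n, (1 - a * q ^ i)

noncomputable def qPochInf (a q : ℂ) : ℂ := ∏' i : ℕ, (1 - a * q ^ i)

noncomputable def qBinom (q : ℂ) (m k : ℕ) : ℂ :=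
  if k ≤ m then qPoch q q m / (qPoch q q k * qPoch q q (m - k)) else 0

section aux

variable {q : ℂ}

lemma qPoch_zero (a : ℂ) : qPoch a q 0 = 1 := by simp [qPoch]

lemma qPoch_succ (a : ℂ) (n : ℕ) : qPoch a q (n + 1) = qPoch a q n * (1 - a * q ^ n) :=
  Finset.prod_range_succ _ _

lemma qPoch_add (a : ℂ) (s t : ℕ) :
    qPoch a q (s + t) = qPoch a q s * qPoch (a * q ^ s) q t := by
  rw [qPoch, qPoch, qPoch, Finset.prod_range_add]
  congr 1
  refine Finset.prod_congr rfl fun i _ => ?_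
  rw [pow_add]; ring

lemma qPoch_peel (a : ℂ) (n : ℕ) : qPoch a q (n + 1) = (1 - a) * qPoch (a * q) q n := by
  rw [add_comm, qPoch_add]
  simp [qPoch]

lemma one_sub_qpow_ne (hq1 : ‖q‖ < 1) (n : ℕ) : (1 : ℂ) - q ^ (n + 1) ≠ 0 := by
  intro h
  have hq : q ^ (n + 1) = 1 := by linear_combination -h
  have : ‖q ^ (n + 1)‖ < 1 := by
    rw [norm_pow]
    exact pow_lt_one₀ (norm_nonneg q) hq1 (Nat.succ_ne_zero n)
  rw [hq] at this; simp at this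

lemma qPochq_ne (hq1 : ‖q‖ < 1) (n : ℕ) : qPoch q q n ≠ 0 := by
  induction n with
  | zero => simp [qPoch]
  | succ n ih =>
    rw [qPoch_succ]
    exact mul_ne_zero ih (by rw [show q * q ^ n = q ^ (n + 1) by ring]; exact one_sub_qpow_ne hq1 n)

lemma qPochq_succ (n : ℕ) : qPoch q q (n + 1) = qPoch q q n * (1 - q ^ (n + 1)) := by
  rw [qPoch_succ]; ring

lemma qBinom_zero (hq1 : ‖q‖ < 1) (n : ℕ) : qBinom q n 0 = 1 := by
  rw [qBinom, if_pos (Nat.zero_le n)]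
  simp [qPoch_zero, div_self (qPochq_ne hq1 n)]

lemma qBinom_eq_zero {n k : ℕ} (h : n < k) : qBinom q n k = 0 := by
  rw [qBinom, if_neg (by omega)]

lemma qBinom_symm (hq1 : ‖q‖ < 1) (a b N : ℕ) (h : N = a + b) :
    qBinom q N a = qBinom q N b := by
  subst h
  rw [qBinom, qBinom, if_pos (by omega), if_pos (by omega),
    show a + b - a = b by omega, show a + b - b = a by omega, mul_comm]

lemma pascal1 (hq1 : ‖q‖ < 1) (M N k a : ℕ) (hN : N = M + 1) (hk : M = a + k) :
    qBinom q N (k + 1) = qBinom q M k + q ^ (k + 1) * qBinom q M (k + 1) := by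
  subst hN hk
  cases a with
  | zero =>
    simp only [Nat.zero_add]
    rw [qBinom, if_pos (by omega), show k + 1 - (k + 1) = 0 by omega, qPoch_zero,
      qBinom, if_pos le_rfl, show k - k = 0 by omega, qPoch_zero,
      qBinom_eq_zero (by omega)]
    field_simp
    rw [div_self (qPochq_ne hq1 _), div_self (qPochq_ne hq1 _)]
    simp
  | succ a =>
    rw [qBinom, if_pos (by omega), qBinom, if_pos (by omega), qBinom, if_pos (by omega),
      show a + 1 + k + 1 - (k + 1) = a + 1 by omega, show a + 1 + k - k = a + 1 by omega,
      show a + 1 + k - (k + 1) = a by omega]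
    rw [show a + 1 + k + 1 = (a + 1 + k) + 1 by omega, qPochq_succ (a + 1 + k),
      qPochq_succ k, qPochq_succ a]
    have h1 := qPochq_ne hq1 (a + 1 + k)
    have h2 := qPochq_ne hq1 k
    have h3 := qPochq_ne hq1 a
    have h4 := one_sub_qpow_ne hq1 k
    have h5 := one_sub_qpow_ne hq1 a
    field_simp
    ring

lemma pascal2 (hq1 : ‖q‖ < 1) (M N k a : ℕ) (hN : N = M + 1) (hk : M = a + k) :
    qBinom q N (k + 1) = q ^ a * qBinom q M k + qBinom q M (k + 1) := by
  subst hN hk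
  cases a with
  | zero =>
    simp only [Nat.zero_add]
    rw [qBinom, if_pos (by omega), show k + 1 - (k + 1) = 0 by omega, qPoch_zero,
      qBinom, if_pos le_rfl, show k - k = 0 by omega, qPoch_zero,
      qBinom_eq_zero (by omega)]
    field_simp
    rw [div_self (qPochq_ne hq1 _), div_self (qPochq_ne hq1 _)]
    simp
  | succ a =>
    rw [qBinom, if_pos (by omega), qBinom, if_pos (by omega), qBinom, if_pos (by omega),
      show a + 1 + k + 1 - (k + 1) = a + 1 by omega, show a + 1 + k - k = a + 1 by omega,
      show a + 1 + k - (k + 1) = a by omega]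
    rw [show a + 1 + k + 1 = (a + 1 + k) + 1 by omega, qPochq_succ (a + 1 + k),
      qPochq_succ k, qPochq_succ a]
    have h1 := qPochq_ne hq1 (a + 1 + k)
    have h2 := qPochq_ne hq1 k
    have h3 := qPochq_ne hq1 a
    have h4 := one_sub_qpow_ne hq1 k
    have h5 := one_sub_qpow_ne hq1 a
    field_simp
    ring

end aux

section tail

variable {q : ℂ}

lemma tailT (hq1 : ‖q‖ < 1) (z : ℂ) (n : ℕ) :
    ∀ t, ∀ K, K + t = n + 1 →
      ∑ i ∈ Finset.range t,
          q ^ (K + i) * qPoch (z * q ^ (K + i + 1)) q (n - (K + i)) *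
            (z * qBinom q (n + (K + i)) (n + 1) + qBinom q (n + (K + i)) (K + i))
        = qBinom q (2 * n + 1) n - qPoch (z * q ^ K) q t * qBinom q (n + K) (n + 1) := by
  intro t
  induction t with
  | zero =>
    intro K hK
    have hKn : K = n + 1 := by omega
    subst hKn
    rw [Finset.sum_range_zero, qPoch_zero, one_mul,
      show n + (n + 1) = 2 * n + 1 by omega,
      qBinom_symm hq1 (n + 1) n (2 * n + 1) (by omega)]
    ring
  | succ t ih =>
    intro K hK
    rw [Finset.sum_range_succ']
    rw [Finset.sum_congr rfl (fun i _ => by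
      rw [show K + (i + 1) = K + 1 + i by omega])]
    rw [ih (K + 1) (by omega)]
    simp only [Nat.add_zero]
    have hP2 : qBinom q (n + (K + 1)) (n + 1)
        = q ^ K * qBinom q (n + K) n + qBinom q (n + K) (n + 1) :=
      pascal2 hq1 (n + K) (n + (K + 1)) n K (by omega) (by omega)
    have hS : qBinom q (n + K) n = qBinom q (n + K) K :=
      qBinom_symm hq1 n K (n + K) rfl
    have hpeel : qPoch (z * q ^ K) q (t + 1)
        = (1 - z * q ^ K) * qPoch (z * q ^ (K + 1)) q t := by
      rw [qPoch_peel, show z * q ^ K * q = z * q ^ (K + 1) by ring]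
    rw [show n - K = t by omega, hP2, hS, hpeel]
    ring

lemma diamond (hq1 : ‖q‖ < 1) (z : ℂ) (n : ℕ) :
    ∑ k ∈ Finset.range (n + 1),
        q ^ k * qPoch (z * q ^ (k + 1)) q (n - k) *
          (z * qBinom q (n + k) (n + 1) + qBinom q (n + k) k)
      = qBinom q (2 * n + 1) n := by
  have := tailT hq1 z n (n + 1) 0 (by omega)
  simp only [Nat.zero_add, Nat.add_zero] at this
  rw [this, qBinom_eq_zero (show n < n + 1 by omega)]
  ring

end tail

section starsec

variable {q : ℂ}

lemma star (hq1 : ‖q‖ < 1) (z : ℂ) (hz : ∀ k, qPoch (z * q) q k ≠ 0) (m : ℕ) :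
    z * qPoch (z * q) q (m + 1) *
        ∑ k ∈ Finset.range (m + 1 + 1), qBinom q (m + 1 + k) k * q ^ k / qPoch (z * q) q k
      = (z - q ^ (m + 1)) * qPoch (z * q) q (m + 1) *
          ∑ k ∈ Finset.range (m + 1), qBinom q (m + k) k * q ^ k / qPoch (z * q) q k
        + q ^ (m + 1) * qBinom q (2 * m + 1) m * (1 + z) := by
  have hsplit : ∀ k, k ≤ m + 1 →
      qPoch (z * q) q (m + 1) = qPoch (z * q) q k * qPoch (z * q ^ (k + 1)) q (m + 1 - k) := by
    intro k hk
    rw [show m + 1 = k + (m + 1 - k) by omega, qPoch_add,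
      show z * q * q ^ k = z * q ^ (k + 1) by ring,
      show k + (m + 1 - k) - k = m + 1 - k by omega]
  have eL : (∑ k ∈ Finset.range (m + 1 + 1),
        z * qPoch (z * q) q (m + 1) * (qBinom q (m + 1 + k) k * q ^ k / qPoch (z * q) q k))
      = ∑ k ∈ Finset.range (m + 1 + 1),
        z * qBinom q (m + 1 + k) k * q ^ k * qPoch (z * q ^ (k + 1)) q (m + 1 - k) := by
    refine Finset.sum_congr rfl fun k hk => ?_
    rw [hsplit k (Nat.lt_succ_iff.mp (Finset.mem_range.mp hk))]
    field_simp [hz k]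
  have eR : (∑ k ∈ Finset.range (m + 1),
        (z - q ^ (m + 1)) * qPoch (z * q) q (m + 1) * (qBinom q (m + k) k * q ^ k / qPoch (z * q) q k))
      = ∑ k ∈ Finset.range (m + 1),
        (z - q ^ (m + 1)) * qBinom q (m + k) k * q ^ k * qPoch (z * q ^ (k + 1)) q (m + 1 - k) := by
    refine Finset.sum_congr rfl fun k hk => ?_
    rw [hsplit k (by have := Finset.mem_range.mp hk; omega)]
    field_simp [hz k]
  rw [Finset.mul_sum, Finset.mul_sum, eL, eR]
  rw [Finset.sum_range_succ]
  have hkey : ∀ k ∈ Finset.range (m + 1),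
      z * qBinom q (m + 1 + k) k * q ^ k * qPoch (z * q ^ (k + 1)) q (m + 1 - k)
        = (z - q ^ (m + 1)) * qBinom q (m + k) k * q ^ k * qPoch (z * q ^ (k + 1)) q (m + 1 - k)
          + q ^ (m + 1) * (1 - z * q ^ (m + 1)) *
            (q ^ k * qPoch (z * q ^ (k + 1)) q (m - k) *
              (z * qBinom q (m + k) (m + 1) + qBinom q (m + k) k)) := by
    intro k hk
    have hkm : k ≤ m := Nat.lt_succ_iff.mp (Finset.mem_range.mp hk)
    have hQ : qPoch (z * q ^ (k + 1)) q (m + 1 - k)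
        = qPoch (z * q ^ (k + 1)) q (m - k) * (1 - z * q ^ (m + 1)) := by
      rw [show m + 1 - k = (m - k) + 1 by omega, qPoch_succ,
        show z * q ^ (k + 1) * q ^ (m - k) = z * (q ^ (k + 1) * q ^ (m - k)) by ring,
        ← pow_add, show k + 1 + (m - k) = m + 1 by omega]
    have hbin : z * qBinom q (m + 1 + k) k
        = (z - q ^ (m + 1)) * qBinom q (m + k) k
          + q ^ (m + 1) * (z * qBinom q (m + k) (m + 1) + qBinom q (m + k) k) := by
      cases k with
      | zero =>
        rw [qBinom_zero hq1, qBinom_zero hq1, qBinom_eq_zero (show m + 0 < m + 1 by omega)]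
        ring
      | succ k' =>
        have hP2 : qBinom q (m + 1 + (k' + 1)) (k' + 1)
            = q ^ (m + 1) * qBinom q (m + (k' + 1)) k' + qBinom q (m + (k' + 1)) (k' + 1) := by
          have := pascal2 hq1 (m + 1 + k') (m + 1 + (k' + 1)) k' (m + 1) (by omega) (by omega)
          rwa [show m + 1 + k' = m + (k' + 1) by omega] at this
        have hS : qBinom q (m + (k' + 1)) k' = qBinom q (m + (k' + 1)) (m + 1) :=
          qBinom_symm hq1 k' (m + 1) (m + (k' + 1)) (by omega)
        rw [hP2, hS]
        ring
    rw [hQ]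
    linear_combination (q ^ k * (qPoch (z * q ^ (k + 1)) q (m - k) * (1 - z * q ^ (m + 1)))) * hbin
  rw [Finset.sum_congr rfl hkey, Finset.sum_add_distrib, ← Finset.mul_sum, diamond hq1 z m]
  have hlast : qBinom q (m + 1 + (m + 1)) (m + 1) = (1 + q ^ (m + 1)) * qBinom q (2 * m + 1) m := by
    have hP1 : qBinom q (m + 1 + (m + 1)) (m + 1)
        = qBinom q (2 * m + 1) m + q ^ (m + 1) * qBinom q (2 * m + 1) (m + 1) :=
      pascal1 hq1 (2 * m + 1) (m + 1 + (m + 1)) m (m + 1) (by omega) (by omega)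
    have hS : qBinom q (2 * m + 1) (m + 1) = qBinom q (2 * m + 1) m :=
      qBinom_symm hq1 (m + 1) m (2 * m + 1) (by omega)
    rw [hP1, hS]; ring
  rw [hlast, show m + 1 - (m + 1) = 0 by omega, qPoch_zero]
  ring

end starsec

theorem stmt_13 (q x : ℂ) (m : ℕ) (hq0 : 0 < ‖q‖) (hq1 : ‖q‖ < 1) (hx0 : x ≠ 0)
    (h1 : ∀ k, qPoch (x * q) q k ≠ 0) (h2 : ∀ k, qPoch (q / x) q k ≠ 0) :
    qPoch x q (m + 1) *
        ∑ k ∈ Finset.range (m + 1), qBinom q (m + k) k * q ^ k / qPoch (x * q) q k +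
      qPoch (1 / x) q (m + 1) *
        ∑ k ∈ Finset.range (m + 1), qBinom q (m + k) k * q ^ k / qPoch (q / x) q k =
    qPoch x q (m + 1) * qPoch (1 / x) q (m + 1) := by
  have hqx : q / x = x⁻¹ * q := by rw [div_eq_mul_inv, mul_comm]
  have h2' : ∀ k, qPoch (x⁻¹ * q) q k ≠ 0 := fun k => by rw [← hqx]; exact h2 k
  have hinv : x * x⁻¹ = 1 := mul_inv_cancel₀ hx0
  rw [hqx, one_div]
  induction m with
  | zero =>
    simp only [Finset.sum_range_one, qPoch_zero, qBinom_zero hq1, div_one, pow_zero, mul_one,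
      one_mul, Nat.add_zero, Nat.zero_add]
    rw [show qPoch x q (0 + 1) = 1 - x by simp [qPoch],
      show qPoch x⁻¹ q (0 + 1) = 1 - x⁻¹ by simp [qPoch]]
    field_simp
    ring
  | succ m IH =>
    have E1 := star hq1 x h1 m
    have E2 := star hq1 x⁻¹ h2' m
    rw [qPoch_peel x (m + 1), qPoch_peel x⁻¹ (m + 1)]
    rw [qPoch_peel x m, qPoch_peel x⁻¹ m] at IH
    have hDa : qPoch (x * q) q (m + 1) = qPoch (x * q) q m * (1 - x * q ^ (m + 1)) := by
      rw [qPoch_succ, show x * q * q ^ m = x * q ^ (m + 1) by ring]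
    have hDb : qPoch (x⁻¹ * q) q (m + 1) = qPoch (x⁻¹ * q) q m * (1 - x⁻¹ * q ^ (m + 1)) := by
      rw [qPoch_succ, show x⁻¹ * q * q ^ m = x⁻¹ * q ^ (m + 1) by ring]
    rw [hDa] at E1 ⊢
    rw [hDb] at E2 ⊢
    set A := ∑ k ∈ Finset.range (m + 1 + 1), qBinom q (m + 1 + k) k * q ^ k / qPoch (x * q) q k with hA
    set B := ∑ k ∈ Finset.range (m + 1 + 1), qBinom q (m + 1 + k) k * q ^ k / qPoch (x⁻¹ * q) q k with hB
    set A0 := ∑ k ∈ Finset.range (m + 1), qBinom q (m + k) k * q ^ k / qPoch (x * q) q k with hA0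
    set B0 := ∑ k ∈ Finset.range (m + 1), qBinom q (m + k) k * q ^ k / qPoch (x⁻¹ * q) q k with hB0
    set D0 := qPoch (x * q) q m with hD0
    set Db0 := qPoch (x⁻¹ * q) q m with hDb0
    set c := qBinom q (2 * m + 1) m with hc
    linear_combination x⁻¹ * (1 - x) * E1 + x * (1 - x⁻¹) * E2
      + (1 - x * q ^ (m + 1)) * (1 - x⁻¹ * q ^ (m + 1)) * IH
      + ((A - A0) * D0 * (x - 1) * (1 - x * q ^ (m + 1))
        + (B - B0) * Db0 * (x⁻¹ - 1) * (1 - x⁻¹ * q ^ (m + 1))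
        - q ^ (m + 1) * c * (x + x⁻¹)) * hinv
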